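/- There is an absolute constant C with the following property. Let α ∈ (0,π) with α ≠ π/2, set ε_α := min(α, |α − π/2|, π − α), let p ∈ [2,∞) be admissible for α, q := p/(p−1), and for ξ ∈ ℝ set Ξ := 2/q + iξ. Then for all ξ ∈ ℝ and all θ, y ∈ (0,α) with θ ≠ y: |∂_θ K(ξ,θ,y)| ≤ C·ε_α^{−1}, |ξ|·|K(ξ,θ,y)| ≤ C·ε_α^{−1}, and |ξ|·|∂_ξ ∂_θ K(ξ,θ,y)| ≤ C·ε_α^{−1}, where ∂_ξ denotes the partial derivative in the real variable ξ and ∂_θ the partial derivative in θ. -/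

import Mathlib

noncomputable section

/-- `p ∈ [2,∞)` is admissible for the aperture `α`: `p ≥ 4` when `α < π/2`, and
`p ≥ 2 p_α = 2·2α/(2α−π)` when `α > π/2`. -/
def Admissible (α p : ℝ) : Prop :=
  (α < Real.pi / 2 ∧ 4 ≤ p) ∨ (Real.pi / 2 < α ∧ 2 * (2 * α / (2 * α - Real.pi)) ≤ p)

/-- `Ξ = 2/q + iξ`. -/
def Xi (q ξ : ℝ) : ℂ := ((2 / q : ℝ) : ℂ) + (ξ : ℂ) * Complex.I

/-- The Green kernel, at frequency `ξ`, of `(∂_t + 2/q)² U + ∂_θ² U = h` on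
`ℝ × (0,α)` with Dirichlet boundary conditions. -/
def Kker (q α ξ θ y : ℝ) : ℂ :=
  if θ ≤ y then
    Complex.sin (Xi q ξ * (θ : ℂ)) * Complex.sin (Xi q ξ * ((y : ℂ) - (α : ℂ))) /
      (Xi q ξ * Complex.sin (Xi q ξ * (α : ℂ)))
  else
    Complex.sin (Xi q ξ * ((θ : ℂ) - (α : ℂ))) * Complex.sin (Xi q ξ * (y : ℂ)) /
      (Xi q ξ * Complex.sin (Xi q ξ * (α : ℂ)))

/-! ### Complex trigonometric modulus estimates -/

lemma sq_abs_sin (z : ℂ) :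
    norm (Complex.sin z) ^ 2 = Real.sin z.re ^ 2 + Real.sinh z.im ^ 2 := by
  rw [Complex.sin_eq]
  have h : Complex.sin ↑z.re * Complex.cosh ↑z.im + Complex.cos ↑z.re * Complex.sinh ↑z.im * Complex.I
      = ↑(Real.sin z.re * Real.cosh z.im) + ↑(Real.cos z.re * Real.sinh z.im) * Complex.I := by
    push_cast; ring
  rw [h, Complex.sq_norm, Complex.normSq_add_mul_I]
  linear_combination (Real.sin z.re)^2 * Real.cosh_sq z.im + (Real.sinh z.im)^2 * Real.sin_sq_add_cos_sq z.re

lemma sq_abs_cos (z : ℂ) :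
    norm (Complex.cos z) ^ 2 = Real.cos z.re ^ 2 + Real.sinh z.im ^ 2 := by
  rw [Complex.cos_eq]
  have h : Complex.cos ↑z.re * Complex.cosh ↑z.im - Complex.sin ↑z.re * Complex.sinh ↑z.im * Complex.I
      = ↑(Real.cos z.re * Real.cosh z.im) + ↑(-(Real.sin z.re * Real.sinh z.im)) * Complex.I := by
    push_cast; ring
  rw [h, Complex.sq_norm, Complex.normSq_add_mul_I]
  linear_combination (Real.cos z.re)^2 * Real.cosh_sq z.im + (Real.sinh z.im)^2 * Real.sin_sq_add_cos_sq z.re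

lemma abs_sin_le' (z : ℂ) : norm (Complex.sin z) ≤ Real.cosh z.im := by
  refine le_of_pow_le_pow_left₀ two_ne_zero (Real.cosh_pos _).le ?_
  rw [sq_abs_sin]
  nlinarith [Real.cosh_sq z.im, Real.neg_one_le_sin z.re, Real.sin_le_one z.re]

lemma abs_cos_le' (z : ℂ) : norm (Complex.cos z) ≤ Real.cosh z.im := by
  refine le_of_pow_le_pow_left₀ two_ne_zero (Real.cosh_pos _).le ?_
  rw [sq_abs_cos]
  nlinarith [Real.cosh_sq z.im, Real.neg_one_le_cos z.re, Real.cos_le_one z.re]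

lemma sin_re_le_abs_sin (z : ℂ) : |Real.sin z.re| ≤ norm (Complex.sin z) := by
  refine le_of_pow_le_pow_left₀ two_ne_zero (norm_nonneg _) ?_
  rw [sq_abs_sin, sq_abs]
  nlinarith [sq_nonneg (Real.sinh z.im)]

lemma sinh_im_le_abs_sin (z : ℂ) : |Real.sinh z.im| ≤ norm (Complex.sin z) := by
  refine le_of_pow_le_pow_left₀ two_ne_zero (norm_nonneg _) ?_
  rw [sq_abs_sin, sq_abs]
  nlinarith [sq_nonneg (Real.sin z.re)]

/-! ### Facts about `Xi` -/

lemma Xi_mul_re (q ξ c : ℝ) : (Xi q ξ * (c : ℂ)).re = (2 / q) * c := by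
  simp [Xi]

lemma Xi_mul_im (q ξ c : ℝ) : (Xi q ξ * (c : ℂ)).im = ξ * c := by
  simp [Xi]

lemma abs_sin_Xi (q ξ c : ℝ) :
    norm (Complex.sin (Xi q ξ * (c:ℂ))) ≤ Real.cosh (|ξ| * |c|) := by
  have h := abs_sin_le' (Xi q ξ * (c:ℂ))
  rw [Xi_mul_im] at h
  rw [← abs_mul, Real.cosh_abs]
  exact h

lemma abs_cos_Xi (q ξ c : ℝ) :
    norm (Complex.cos (Xi q ξ * (c:ℂ))) ≤ Real.cosh (|ξ| * |c|) := by
  have h := abs_cos_le' (Xi q ξ * (c:ℂ))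
  rw [Xi_mul_im] at h
  rw [← abs_mul, Real.cosh_abs]
  exact h

/-! ### Derivative computations -/

lemma hasDerivAt_sin_Xi_mul (q ξ c : ℝ) :
    HasDerivAt (fun s : ℝ => Complex.sin (Xi q s * (c : ℂ)))
      (Complex.cos (Xi q ξ * (c : ℂ)) * (Complex.I * (c : ℂ))) ξ := by
  have hG : HasDerivAt (fun z : ℂ => Complex.sin ((((2/q : ℝ) : ℂ) + z * Complex.I) * (c : ℂ)))
      (Complex.cos (Xi q ξ * (c : ℂ)) * (Complex.I * (c : ℂ))) ((ξ : ℝ) : ℂ) := by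
    have h1 : HasDerivAt (fun z : ℂ => (((2/q : ℝ) : ℂ) + z * Complex.I) * (c : ℂ))
        (Complex.I * (c : ℂ)) ((ξ : ℝ) : ℂ) := by
      simpa using (((hasDerivAt_id ((ξ:ℝ):ℂ)).mul_const Complex.I).const_add
        (((2/q : ℝ) : ℂ))).mul_const (c : ℂ)
    simpa [Xi, Function.comp_def] using (Complex.hasDerivAt_sin ((((2/q : ℝ):ℂ) + ((ξ:ℝ):ℂ) * Complex.I) * (c : ℂ))).comp
      (((ξ:ℝ)):ℂ) h1
  exact hG.comp_ofReal

lemma two_cos_mul_sin (A B : ℂ) :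
    Complex.cos A * Complex.sin B = (Complex.sin (A + B) + Complex.sin (B - A)) / 2 := by
  rw [Complex.sin_add, Complex.sin_sub]; ring

lemma hasDerivAt_sin_Xi_mul_theta (q ξ : ℝ) (θ : ℝ) :
    HasDerivAt (fun t : ℝ => Complex.sin (Xi q ξ * (t : ℂ)))
      (Complex.cos (Xi q ξ * (θ : ℂ)) * Xi q ξ) θ := by
  have h1 : HasDerivAt (fun z : ℂ => Complex.sin (Xi q ξ * z))
      (Complex.cos (Xi q ξ * (θ : ℂ)) * Xi q ξ) ((θ : ℝ) : ℂ) := by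
    simpa [Function.comp_def] using (Complex.hasDerivAt_sin (Xi q ξ * (θ:ℂ))).comp ((θ:ℝ):ℂ)
      ((hasDerivAt_id ((θ:ℝ):ℂ)).const_mul (Xi q ξ))
  exact h1.comp_ofReal

lemma hasDerivAt_sin_Xi_mul_theta_sub (q ξ α : ℝ) (θ : ℝ) :
    HasDerivAt (fun t : ℝ => Complex.sin (Xi q ξ * ((t : ℂ) - (α : ℂ))))
      (Complex.cos (Xi q ξ * ((θ : ℂ) - (α : ℂ))) * Xi q ξ) θ := by
  have h1 : HasDerivAt (fun z : ℂ => Complex.sin (Xi q ξ * (z - (α:ℂ))))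
      (Complex.cos (Xi q ξ * ((θ:ℂ) - (α:ℂ))) * Xi q ξ) ((θ : ℝ) : ℂ) := by
    simpa [Function.comp_def] using (Complex.hasDerivAt_sin (Xi q ξ * ((θ:ℂ) - (α:ℂ)))).comp ((θ:ℝ):ℂ)
      (((hasDerivAt_id ((θ:ℝ):ℂ)).sub_const ((α:ℂ))).const_mul (Xi q ξ))
  exact h1.comp_ofReal

lemma deriv_inner_lt {q α ξ θ y : ℝ} (hθy : θ < y) (hΞ : Xi q ξ ≠ 0)
    (hs : Complex.sin (Xi q ξ * (α : ℂ)) ≠ 0) :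
    deriv (fun t : ℝ => Kker q α ξ t y) θ
      = Complex.cos (Xi q ξ * (θ:ℂ)) * Complex.sin (Xi q ξ * ((y:ℂ) - (α:ℂ))) /
          Complex.sin (Xi q ξ * (α:ℂ)) := by
  have hev : (fun t : ℝ => Kker q α ξ t y) =ᶠ[nhds θ]
      fun t : ℝ => Complex.sin (Xi q ξ * (t:ℂ)) * Complex.sin (Xi q ξ * ((y:ℂ) - (α:ℂ))) /
        (Xi q ξ * Complex.sin (Xi q ξ * (α:ℂ))) := by
    filter_upwards [Iio_mem_nhds hθy] with t ht
    simp [Kker, le_of_lt (Set.mem_Iio.mp ht)]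
  rw [hev.deriv_eq]
  rw [(((hasDerivAt_sin_Xi_mul_theta q ξ θ).mul_const _).div_const _).deriv]
  field_simp

lemma deriv_inner_gt {q α ξ θ y : ℝ} (hθy : y < θ) (hΞ : Xi q ξ ≠ 0)
    (hs : Complex.sin (Xi q ξ * (α : ℂ)) ≠ 0) :
    deriv (fun t : ℝ => Kker q α ξ t y) θ
      = Complex.cos (Xi q ξ * ((θ:ℂ) - (α:ℂ))) * Complex.sin (Xi q ξ * (y:ℂ)) /
          Complex.sin (Xi q ξ * (α:ℂ)) := by
  have hev : (fun t : ℝ => Kker q α ξ t y) =ᶠ[nhds θ]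
      fun t : ℝ => Complex.sin (Xi q ξ * ((t:ℂ) - (α:ℂ))) * Complex.sin (Xi q ξ * (y:ℂ)) /
        (Xi q ξ * Complex.sin (Xi q ξ * (α:ℂ))) := by
    filter_upwards [Ioi_mem_nhds hθy] with t ht
    simp [Kker, not_le.mpr (Set.mem_Ioi.mp ht)]
  rw [hev.deriv_eq]
  rw [(((hasDerivAt_sin_Xi_mul_theta_sub q ξ α θ).mul_const _).div_const _).deriv]
  field_simp

lemma Nc_expand (q ξ α w : ℝ) :
    ((w:ℂ) - α) * Complex.sin (Xi q ξ * ((α + w : ℝ):ℂ)) +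
      ((w:ℂ) + α) * Complex.sin (Xi q ξ * ((α - w : ℝ):ℂ))
      = 2 * ((w:ℂ) * Complex.cos (Xi q ξ * (w:ℂ)) * Complex.sin (Xi q ξ * (α:ℂ)) -
          (α:ℂ) * Complex.sin (Xi q ξ * (w:ℂ)) * Complex.cos (Xi q ξ * (α:ℂ))) := by
  have h1 : ((α + w : ℝ):ℂ) = (α:ℂ) + w := by push_cast; ring
  have h2 : ((α - w : ℝ):ℂ) = (α:ℂ) - w := by push_cast; ring
  rw [h1, h2, mul_add, mul_sub, Complex.sin_add, Complex.sin_sub]; ring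

def Nc (q ξ α w : ℝ) : ℂ :=
  ((w:ℂ) - α) * Complex.sin (Xi q ξ * ((α + w : ℝ):ℂ)) +
    ((w:ℂ) + α) * Complex.sin (Xi q ξ * ((α - w : ℝ):ℂ))

lemma hasDerivAt_outer (q ξ α a b : ℝ) (hs : Complex.sin (Xi q ξ * (α:ℂ)) ≠ 0) :
    HasDerivAt (fun s : ℝ =>
        (Complex.sin (Xi q s * (a:ℂ)) + Complex.sin (Xi q s * (b:ℂ))) /
          (2 * Complex.sin (Xi q s * (α:ℂ))))
      (Complex.I * (Nc q ξ α a + Nc q ξ α b) / (4 * Complex.sin (Xi q ξ * (α:ℂ)) ^ 2)) ξ := by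
  have h2s : (2 : ℂ) * Complex.sin (Xi q ξ * (α:ℂ)) ≠ 0 := by
    simp [hs]
  have hnum := (hasDerivAt_sin_Xi_mul q ξ a).add (hasDerivAt_sin_Xi_mul q ξ b)
  have hden := (hasDerivAt_sin_Xi_mul q ξ α).const_mul (2 : ℂ)
  have hF := hnum.div hden h2s
  refine hF.congr_deriv ?_
  simp only [Pi.add_apply]
  rw [Nc, Nc, Nc_expand, Nc_expand]
  field_simp
  ring

/-! ### Real elementary estimates -/

open Real in
lemma exp_two_le_nine : Real.exp 2 ≤ 9 := by
  have h := Real.exp_one_lt_d9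
  have h2 : Real.exp 2 = Real.exp 1 * Real.exp 1 := by
    rw [← Real.exp_add]; norm_num
  nlinarith [Real.exp_pos 1]

lemma cosh_le_five {x : ℝ} (h0 : 0 ≤ x) (h2 : x ≤ 2) : Real.cosh x ≤ 5 := by
  rw [Real.cosh_eq]
  have h3 : Real.exp x ≤ Real.exp 2 := Real.exp_le_exp.mpr h2
  have h4 : Real.exp (-x) ≤ 1 := Real.exp_le_one_iff.mpr (by linarith)
  nlinarith [exp_two_le_nine]

lemma one_le_sinh_one : 1 ≤ Real.sinh 1 := by
  rw [Real.sinh_eq]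
  have h1 := Real.exp_one_gt_d9
  have h2 : Real.exp (-1) = 1 / Real.exp 1 := by
    rw [Real.exp_neg]; ring
  have h3 : Real.exp (-1) ≤ 1 / 2.7182818283 := by
    rw [h2]; gcongr
  nlinarith

lemma cosh_le_exp {x : ℝ} (h0 : 0 ≤ x) : Real.cosh x ≤ Real.exp x := by
  rw [Real.cosh_eq]
  have : Real.exp (-x) ≤ Real.exp x := Real.exp_le_exp.mpr (by linarith)
  linarith

lemma exp_two_mul_le_six_sinh_sq {t : ℝ} (ht : 1 ≤ t) :
    Real.exp (2 * t) ≤ 6 * Real.sinh t ^ 2 := by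
  have hE : (2.7182818283 : ℝ) < Real.exp t := by
    calc (2.7182818283 : ℝ) < Real.exp 1 := Real.exp_one_gt_d9
    _ ≤ Real.exp t := Real.exp_le_exp.mpr ht
  have hEpos : (0:ℝ) < Real.exp t := Real.exp_pos t
  have hs : Real.sinh t = (Real.exp t - Real.exp (-t)) / 2 := Real.sinh_eq t
  have hneg : Real.exp (-t) = 1 / Real.exp t := by rw [Real.exp_neg]; ring
  have h2t : Real.exp (2*t) = Real.exp t * Real.exp t := by
    rw [← Real.exp_add]; ring_nf
  rw [h2t, hs, hneg]
  have h1 : (1:ℝ) / Real.exp t ≤ 1 / 2.7182818283 := by gcongr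
  have h1' : (0:ℝ) < 1 / Real.exp t := by positivity
  nlinarith [sq_nonneg (1 / Real.exp t), sq_nonneg (Real.exp t * (1/Real.exp t) - 1),
    mul_pos hEpos h1']

lemma keyIneq {α s w m : ℝ} (hα : 0 < α) (hs : 0 ≤ s) (hw0 : 0 ≤ w) (hw : w ≤ α)
    (hm0 : 0 < m) (hm1 : m ≤ 1) :
    s * ((α - w) * Real.cosh (s*(α+w)) + (α + w) * Real.cosh (s*(α-w)))
      ≤ 32 * (m^2 + Real.sinh (s*α)^2) / m := by
  set t := s * α with ht
  have ht0 : 0 ≤ t := mul_nonneg hs hα.le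
  have hst : Real.sinh t ^ 2 ≤ m^2 + Real.sinh t ^2 := by nlinarith
  have hsinht : t ≤ Real.sinh t := Real.self_le_sinh_iff.mpr ht0
  have hd0 : 0 ≤ s * (α - w) := mul_nonneg hs (by linarith)
  have hd1 : s * (α - w) ≤ t := by nlinarith
  have he0 : 0 ≤ s * (α + w) := mul_nonneg hs (by linarith)
  have he1 : s * (α + w) ≤ 2 * t := by nlinarith
  rcases le_or_gt t 1 with h1 | h1
  · have hc1 : Real.cosh (s*(α+w)) ≤ 5 := cosh_le_five he0 (by linarith)
    have hc2 : Real.cosh (s*(α-w)) ≤ 5 := cosh_le_five hd0 (by linarith)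
    have hLHS : s * ((α - w) * Real.cosh (s*(α+w)) + (α + w) * Real.cosh (s*(α-w)))
        ≤ 10 * t := by nlinarith [Real.one_le_cosh (s*(α+w)), Real.one_le_cosh (s*(α-w))]
    have hRHS : 64 * Real.sinh t ≤ 32 * (m^2 + Real.sinh t ^2) / m := by
      rw [le_div_iff₀ hm0]
      nlinarith [sq_nonneg (m - Real.sinh t)]
    have : (10:ℝ) * t ≤ 64 * Real.sinh t := by nlinarith
    linarith
  · have hsh1 : 1 ≤ Real.sinh t := by
      calc (1:ℝ) ≤ Real.sinh 1 := one_le_sinh_one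
      _ ≤ Real.sinh t := Real.sinh_le_sinh.mpr h1.le
    have hcosh2 : Real.cosh t ≤ 2 * Real.sinh t := by
      have : Real.cosh t - Real.sinh t ≤ 1 := by
        rw [Real.cosh_sub_sinh]; exact Real.exp_le_one_iff.mpr (by linarith)
      linarith
    have hc2 : Real.cosh (s*(α-w)) ≤ Real.cosh t := by
      rw [Real.cosh_le_cosh]
      rw [abs_of_nonneg hd0, abs_of_nonneg ht0]; exact hd1
    have hterm2 : s * (α + w) * Real.cosh (s*(α-w)) ≤ 4 * Real.sinh t ^ 2 := by
      nlinarith [Real.one_le_cosh (s*(α-w))]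
    set d := s * (α - w) with hd
    have hde : s * (α + w) = 2 * t - d := by rw [hd]; ring
    have hcoshe : Real.cosh (s*(α+w)) ≤ Real.exp (2*t) * Real.exp (-d) := by
      rw [hde]
      calc Real.cosh (2*t - d) ≤ Real.exp (2*t - d) := cosh_le_exp (by linarith)
      _ = Real.exp (2*t) * Real.exp (-d) := by rw [← Real.exp_add]; ring_nf
    have hdexp : d * Real.exp (-d) ≤ 1 := by
      have h := Real.add_one_le_exp d
      have hpos : 0 < Real.exp d := Real.exp_pos d
      have : Real.exp (-d) = 1 / Real.exp d := by rw [Real.exp_neg]; ring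
      rw [this]
      rw [mul_one_div, div_le_one hpos]
      linarith
    have hterm1 : d * Real.cosh (s*(α+w)) ≤ 6 * Real.sinh t ^ 2 := by
      have h6 : Real.exp (2*t) ≤ 6 * Real.sinh t ^ 2 := exp_two_mul_le_six_sinh_sq h1.le
      have hexppos : 0 < Real.exp (2*t) := Real.exp_pos _
      calc d * Real.cosh (s*(α+w)) ≤ d * (Real.exp (2*t) * Real.exp (-d)) := by
            apply mul_le_mul_of_nonneg_left hcoshe hd0
      _ = (d * Real.exp (-d)) * Real.exp (2*t) := by ring
      _ ≤ 1 * Real.exp (2*t) := by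
            apply mul_le_mul_of_nonneg_right hdexp hexppos.le
      _ ≤ 6 * Real.sinh t ^ 2 := by linarith
    have hLHS : s * ((α - w) * Real.cosh (s*(α+w)) + (α + w) * Real.cosh d)
        ≤ 10 * Real.sinh t ^ 2 := by
      have e1 : s * ((α - w) * Real.cosh (s*(α+w))) = d * Real.cosh (s*(α+w)) := by
        rw [hd]; ring
      nlinarith
    have hRHS : 32 * Real.sinh t ^ 2 ≤ 32 * (m^2 + Real.sinh t ^2) / m := by
      rw [le_div_iff₀ hm0]
      nlinarith [sq_nonneg (Real.sinh t)]
    nlinarith [sq_nonneg (Real.sinh t)]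

open Real in
lemma sin_lower {x d : ℝ} (hd0 : 0 < d) (h1 : d ≤ x) (h2 : x ≤ π - d) :
    (2/π) * d ≤ Real.sin x := by
  rcases le_or_gt x (π/2) with h | h
  · calc (2/π) * d ≤ (2/π) * x := by
          apply mul_le_mul_of_nonneg_left h1
          positivity
    _ ≤ Real.sin x := Real.mul_le_sin (by linarith) h
  · rw [← Real.sin_pi_sub]
    calc (2/π) * d ≤ (2/π) * (π - x) := by
          apply mul_le_mul_of_nonneg_left (by linarith)
          positivity
    _ ≤ Real.sin (π - x) := Real.mul_le_sin (by linarith) (by linarith)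

lemma cosh_mul_cosh_le {a b : ℝ} (ha : 0 ≤ a) (hb : 0 ≤ b) :
    Real.cosh a * Real.cosh b ≤ Real.cosh (a + b) := by
  rw [Real.cosh_add]
  nlinarith [Real.sinh_nonneg_iff.mpr ha, Real.sinh_nonneg_iff.mpr hb]

lemma cosh_prod_le {s c1 c2 α : ℝ} (h1 : 0 ≤ c1) (h2 : 0 ≤ c2) (hsum : c1 + c2 ≤ α)
    (hs : 0 ≤ s) :
    Real.cosh (s*c1) * Real.cosh (s*c2) ≤ Real.cosh (s*α) := by
  calc Real.cosh (s*c1) * Real.cosh (s*c2) ≤ Real.cosh (s*c1 + s*c2) :=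
        cosh_mul_cosh_le (mul_nonneg hs h1) (mul_nonneg hs h2)
  _ ≤ Real.cosh (s*α) := by
      rw [Real.cosh_le_cosh,
        abs_of_nonneg (add_nonneg (mul_nonneg hs h1) (mul_nonneg hs h2)),
        abs_of_nonneg (mul_nonneg hs (le_trans (add_nonneg h1 h2) hsum))]
      nlinarith

lemma ratio_le_two_div {num T m x : ℝ} (hm0 : 0 < m) (hm1 : m ≤ 1) (hx : 0 ≤ x)
    (hnum : num ≤ Real.cosh x) (hTm : m ≤ T) (hTs : Real.sinh x ≤ T) :
    num / T ≤ 2 / m := by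
  have hT0 : 0 < T := lt_of_lt_of_le hm0 hTm
  have hc : Real.cosh x ≤ 1 + Real.sinh x := by
    have h := Real.cosh_sub_sinh x
    have : Real.exp (-x) ≤ 1 := Real.exp_le_one_iff.mpr (by linarith)
    linarith
  rw [div_le_div_iff₀ hT0 hm0]
  have hsh : 0 ≤ Real.sinh x := Real.sinh_nonneg_iff.mpr hx
  nlinarith

open Real in
lemma m_lower {α p : ℝ} (hα0 : 0 < α) (hαπ : α < π) (hne : α ≠ π/2) (hp : 2 ≤ p)
    (hadm : Admissible α p) :
    (2/π) * min α (min |α - π/2| (π - α)) ≤ |Real.sin ((2/(p/(p-1))) * α)| := by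
  have hπ := Real.pi_pos
  set ε := min α (min |α - π/2| (π - α)) with hεdef
  have hεα : ε ≤ α := min_le_left _ _
  have hεabs : ε ≤ |α - π/2| := le_trans (min_le_right _ _) (min_le_left _ _)
  have hεπα : ε ≤ π - α := le_trans (min_le_right _ _) (min_le_right _ _)
  have hε0 : 0 < ε := by
    apply lt_min hα0
    apply lt_min (abs_pos.mpr (sub_ne_zero.mpr hne))
    linarith
  have hp0 : (0:ℝ) < p := by linarith
  have hp1 : (0:ℝ) < p - 1 := by linarith
  set σ := 2/(p/(p-1)) with hσdef
  have hσeq : σ = 2 - 2/p := by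
    rw [hσdef]; field_simp
  have hσ1 : 1 ≤ σ := by
    rw [hσeq]
    have : 2/p ≤ 1 := by rw [div_le_one hp0]; linarith
    linarith
  have hσ2 : σ < 2 := by
    rw [hσeq]
    have : 0 < 2/p := by positivity
    linarith
  rcases hadm with ⟨hα2, _⟩ | ⟨hα2, hpadm⟩
  · have habs : |α - π/2| = π/2 - α := by
      rw [abs_of_neg (by linarith)]; ring
    have hx1 : ε ≤ σ * α := by
      calc ε ≤ α := hεα
      _ ≤ σ * α := le_mul_of_one_le_left hα0.le hσ1
    have hx2 : σ * α ≤ π - ε := by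
      have h1 : σ * α ≤ 2 * α := by nlinarith
      have h2 : ε ≤ π/2 - α := by rw [habs] at hεabs; exact hεabs
      nlinarith
    calc (2/π) * ε ≤ Real.sin (σ * α) := sin_lower hε0 hx1 hx2
    _ ≤ |Real.sin (σ * α)| := le_abs_self _
  · have habs : |α - π/2| = α - π/2 := by
      rw [abs_of_pos (by linarith)]
    have h2απ : 0 < 2*α - π := by linarith
    have hpadm' : 4*α/(2*α - π) ≤ p := by
      calc 4*α/(2*α-π) = 2 * (2 * α / (2 * α - Real.pi)) := by ring
      _ ≤ p := hpadm
    have h2p : 2/p ≤ (2*α - π)/(2*α) := by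
      rw [div_le_div_iff₀ hp0 (by linarith)]
      have h4 : 0 < 4*α/(2*α-π) := by positivity
      have := (div_le_iff₀ h2απ).mp hpadm'
      nlinarith
    have hσα : α + π/2 ≤ σ * α := by
      have : σ ≥ (2*α + π)/(2*α) := by
        rw [hσeq]
        have hh : (2*α - π)/(2*α) + (2*α+π)/(2*α) = 2 := by field_simp; ring
        linarith
      calc α + π/2 = (2*α + π)/(2*α) * α := by field_simp
      _ ≤ σ * α := by nlinarith
    have hεabs' : ε ≤ α - π/2 := by rw [habs] at hεabs; exact hεabs
    have hx1 : ε ≤ σ * α - π := by linarith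
    have hx2 : σ * α - π ≤ π - ε := by
      have h1 : σ * α < 2 * α := by nlinarith
      linarith
    have hsin := sin_lower hε0 hx1 hx2
    have hrw : Real.sin (σ * α) = -Real.sin (σ * α - π) := by
      have h := Real.sin_add_pi (σ * α - π)
      rw [show σ * α - π + π = σ * α by ring] at h
      rw [h]
    calc (2/π) * ε ≤ Real.sin (σ * α - π) := hsin
    _ ≤ |Real.sin (σ * α - π)| := le_abs_self _
    _ = |Real.sin (σ * α)| := by rw [hrw, abs_neg]

open Real in
lemma to_eps {v m ε c : ℝ} (hε0 : 0 < ε) (hm0 : 0 < m) (hπm : (2/π)*ε ≤ m)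
    (hc0 : 0 ≤ c) (hc : c ≤ 32) (hv : v ≤ c/m) : v ≤ 100/ε := by
  have hπ := Real.pi_pos
  have hπ4 := Real.pi_le_four
  have h1 : (0:ℝ) < (2/π)*ε := by positivity
  have h2 : c/m ≤ c/((2/π)*ε) := by gcongr
  have h3 : c/((2/π)*ε) ≤ 100/ε := by
    rw [show (2/π)*ε = (2*ε)/π by ring, div_div_eq_mul_div]
    rw [div_le_div_iff₀ (by positivity) hε0]
    have hcp : c * π ≤ 128 := by nlinarith
    nlinarith [mul_le_mul_of_nonneg_right hcp hε0.le]
  linarith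


lemma sinh_abs' (x : ℝ) : Real.sinh |x| = |Real.sinh x| := by
  rcases le_or_gt 0 x with h | h
  · rw [abs_of_nonneg h, abs_of_nonneg (Real.sinh_nonneg_iff.mpr h)]
  · rw [abs_of_neg h, Real.sinh_neg,
      abs_of_neg (by rwa [Real.sinh_neg_iff] : Real.sinh x < 0)]

/-! ### The three quantity bounds -/

lemma q1_bound {q α ξ m : ℝ} (hα0 : 0 < α) (hm0 : 0 < m) (hm1 : m ≤ 1)
    (hTm : m ≤ norm (Complex.sin (Xi q ξ * (α:ℂ))))
    (hTs : Real.sinh (|ξ| *α) ≤ norm (Complex.sin (Xi q ξ * (α:ℂ))))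
    {c1 c2 : ℝ} (hsum : |c1| + |c2| ≤ α) :
    norm (Complex.cos (Xi q ξ * (c1:ℂ)) * Complex.sin (Xi q ξ * (c2:ℂ)) /
      Complex.sin (Xi q ξ * (α:ℂ))) ≤ 2/m := by
  rw [norm_div, norm_mul]
  refine ratio_le_two_div hm0 hm1 (by positivity) ?_ hTm hTs
  calc norm (Complex.cos (Xi q ξ * (c1:ℂ))) * norm (Complex.sin (Xi q ξ * (c2:ℂ)))
      ≤ Real.cosh (|ξ| * |c1|) * Real.cosh (|ξ| * |c2|) := by
        apply mul_le_mul (abs_cos_Xi q ξ c1) (abs_sin_Xi q ξ c2) (norm_nonneg _)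
          (Real.cosh_pos _).le
  _ ≤ Real.cosh (|ξ| * α) := cosh_prod_le (abs_nonneg c1) (abs_nonneg c2) hsum (abs_nonneg ξ)

lemma q2_bound {q α ξ m : ℝ} (hα0 : 0 < α) (hm0 : 0 < m) (hm1 : m ≤ 1)
    (hTm : m ≤ norm (Complex.sin (Xi q ξ * (α:ℂ))))
    (hTs : Real.sinh (|ξ| *α) ≤ norm (Complex.sin (Xi q ξ * (α:ℂ))))
    (hΞ : Xi q ξ ≠ 0)
    {c1 c2 : ℝ} (hsum : |c1| + |c2| ≤ α) :
    |ξ| * norm (Complex.sin (Xi q ξ * (c1:ℂ)) * Complex.sin (Xi q ξ * (c2:ℂ)) /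
      (Xi q ξ * Complex.sin (Xi q ξ * (α:ℂ)))) ≤ 2/m := by
  have hT0 : 0 < norm (Complex.sin (Xi q ξ * (α:ℂ))) := lt_of_lt_of_le hm0 hTm
  have hA0 : 0 < norm (Xi q ξ) := norm_pos_iff.mpr hΞ
  have hξA : |ξ| ≤ norm (Xi q ξ) := by
    have h := Complex.abs_im_le_norm (Xi q ξ)
    simpa [Xi] using h
  rw [norm_div, norm_mul, norm_mul]
  set n1 := norm (Complex.sin (Xi q ξ * (c1:ℂ)))
  set n2 := norm (Complex.sin (Xi q ξ * (c2:ℂ)))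
  set T := norm (Complex.sin (Xi q ξ * (α:ℂ)))
  have key : |ξ| * (n1 * n2 / (norm (Xi q ξ) * T))
      = (|ξ| / norm (Xi q ξ)) * (n1 * n2 / T) := by
    field_simp
  rw [key]
  have h1 : |ξ| / norm (Xi q ξ) ≤ 1 := by
    rw [div_le_one hA0]; exact hξA
  have h2 : n1 * n2 / T ≤ 2/m := by
    refine ratio_le_two_div hm0 hm1 (by positivity) ?_ hTm hTs
    calc n1 * n2 ≤ Real.cosh (|ξ| * |c1|) * Real.cosh (|ξ| * |c2|) := by
          apply mul_le_mul (abs_sin_Xi q ξ c1) (abs_sin_Xi q ξ c2) (norm_nonneg _)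
            (Real.cosh_pos _).le
    _ ≤ Real.cosh (|ξ| * α) := cosh_prod_le (abs_nonneg c1) (abs_nonneg c2) hsum (abs_nonneg ξ)
  calc (|ξ| / norm (Xi q ξ)) * (n1 * n2 / T) ≤ 1 * (2/m) := by
        apply mul_le_mul h1 h2 (by positivity) (by norm_num)
  _ = 2/m := by ring

lemma absNc {q ξ α w : ℝ} (hw : |w| ≤ α) :
    norm (Nc q ξ α w)
      ≤ (α - |w|) * Real.cosh (|ξ| *(α + |w|)) + (α + |w|) * Real.cosh (|ξ| *(α - |w|)) := by
  have h1 : norm (Nc q ξ α w)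
      ≤ |w - α| * Real.cosh (|ξ| * |α + w|) + |w + α| * Real.cosh (|ξ| * |α - w|) := by
    rw [Nc]
    calc norm (((w:ℂ) - α) * Complex.sin (Xi q ξ * ((α + w : ℝ):ℂ)) +
          ((w:ℂ) + α) * Complex.sin (Xi q ξ * ((α - w : ℝ):ℂ)))
        ≤ norm (((w:ℂ) - α) * Complex.sin (Xi q ξ * ((α + w : ℝ):ℂ))) +
          norm (((w:ℂ) + α) * Complex.sin (Xi q ξ * ((α - w : ℝ):ℂ))) :=
          norm_add_le _ _
    _ ≤ |w - α| * Real.cosh (|ξ| * |α + w|) + |w + α| * Real.cosh (|ξ| * |α - w|) := by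
        rw [norm_mul, norm_mul]
        have e1 : ((w:ℂ) - α) = ((w - α : ℝ):ℂ) := by push_cast; ring
        have e2 : ((w:ℂ) + α) = ((w + α : ℝ):ℂ) := by push_cast; ring
        rw [e1, e2, Complex.norm_real, Real.norm_eq_abs, Complex.norm_real, Real.norm_eq_abs]
        apply add_le_add
        · exact mul_le_mul_of_nonneg_left (abs_sin_Xi q ξ (α+w)) (abs_nonneg _)
        · exact mul_le_mul_of_nonneg_left (abs_sin_Xi q ξ (α-w)) (abs_nonneg _)
  have hwα : -α ≤ w := by
    rcases abs_le.mp hw with ⟨h, _⟩; exact h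
  have hwα' : w ≤ α := by
    rcases abs_le.mp hw with ⟨_, h⟩; exact h
  rcases le_or_gt 0 w with hw0 | hw0
  · rw [abs_of_nonneg hw0] at *
    rw [abs_of_nonpos (by linarith : w - α ≤ 0), abs_of_nonneg (by linarith : 0 ≤ w + α),
      abs_of_nonneg (by linarith : (0:ℝ) ≤ α + w), abs_of_nonneg (by linarith : (0:ℝ) ≤ α - w)] at h1
    calc norm (Nc q ξ α w) ≤ _ := h1
    _ = (α - w) * Real.cosh (|ξ| *(α + w)) + (α + w) * Real.cosh (|ξ| *(α - w)) := by
        ring_nf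
  · rw [abs_of_neg hw0] at *
    rw [abs_of_nonpos (by linarith : w - α ≤ 0), abs_of_nonneg (by linarith : 0 ≤ w + α),
      abs_of_nonneg (by linarith : (0:ℝ) ≤ α + w), abs_of_nonneg (by linarith : (0:ℝ) ≤ α - w)] at h1
    calc norm (Nc q ξ α w) ≤ _ := h1
    _ = (α - -w) * Real.cosh (|ξ| *(α + -w)) + (α + -w) * Real.cosh (|ξ| *(α - -w)) := by
        rw [show α + w = α - -w by ring, show α - w = α + -w by ring]
        ring

lemma q3_bound {q α ξ m : ℝ} (hα0 : 0 < α) (hm0 : 0 < m) (hm1 : m ≤ 1)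
    (hTsq : norm (Complex.sin (Xi q ξ * (α:ℂ))) ^ 2
      = m^2 + Real.sinh (|ξ| * α)^2)
    {a b : ℝ} (ha : |a| ≤ α) (hb : |b| ≤ α) :
    |ξ| * norm (Complex.I * (Nc q ξ α a + Nc q ξ α b) /
      (4 * Complex.sin (Xi q ξ * (α:ℂ)) ^ 2)) ≤ 16/m := by
  set T := norm (Complex.sin (Xi q ξ * (α:ℂ))) with hT
  have hT0 : 0 < T ^ 2 := by
    rw [hTsq]; positivity
  have hkey : ∀ w : ℝ, |w| ≤ α →
      |ξ| * norm (Nc q ξ α w) ≤ 32 * (T^2) / m := by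
    intro w hw
    calc |ξ| * norm (Nc q ξ α w)
        ≤ |ξ| * ((α - |w|) * Real.cosh (|ξ| * (α + |w|)) +
            (α + |w|) * Real.cosh (|ξ| * (α - |w|))) :=
          mul_le_mul_of_nonneg_left (absNc hw) (abs_nonneg ξ)
    _ ≤ 32 * (m^2 + Real.sinh (|ξ| * α)^2) / m :=
          keyIneq hα0 (abs_nonneg ξ) (abs_nonneg w) hw hm0 hm1
    _ = 32 * (T^2) / m := by rw [hTsq]
  have habs : norm (Complex.I * (Nc q ξ α a + Nc q ξ α b) /
      (4 * Complex.sin (Xi q ξ * (α:ℂ)) ^ 2))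
      = norm (Nc q ξ α a + Nc q ξ α b) / (4 * T^2) := by
    rw [norm_div, norm_mul, Complex.norm_I, one_mul, norm_mul, norm_pow]
    norm_num
    rfl
  rw [habs]
  have hadd : norm (Nc q ξ α a + Nc q ξ α b)
      ≤ norm (Nc q ξ α a) + norm (Nc q ξ α b) := norm_add_le _ _
  have h1 : |ξ| * norm (Nc q ξ α a + Nc q ξ α b) ≤ 64 * (T^2) / m := by
    calc |ξ| * norm (Nc q ξ α a + Nc q ξ α b)
        ≤ |ξ| * (norm (Nc q ξ α a) + norm (Nc q ξ α b)) :=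
          mul_le_mul_of_nonneg_left hadd (abs_nonneg ξ)
    _ = |ξ| * norm (Nc q ξ α a) + |ξ| * norm (Nc q ξ α b) := by ring
    _ ≤ 32 * (T^2) / m + 32 * (T^2) / m := add_le_add (hkey a ha) (hkey b hb)
    _ = 64 * (T^2) / m := by ring
  calc |ξ| * (norm (Nc q ξ α a + Nc q ξ α b) / (4 * T^2))
      = (|ξ| * norm (Nc q ξ α a + Nc q ξ α b)) / (4 * T^2) := by ring
  _ ≤ (64 * (T^2) / m) / (4 * T^2) := by
      have h4 : (0:ℝ) < 4 * T^2 := by positivity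
      exact (div_le_div_iff_of_pos_right h4).mpr h1
  _ = 16/m := by
      have hTne : T ≠ 0 := by rintro h; simp [h] at hT0
      field_simp; ring

/-- Uniform bounds `|∂_θ K| ≤ C ε_α⁻¹`, `|ξ||K| ≤ C ε_α⁻¹` and
`|ξ||∂_ξ ∂_θ K| ≤ C ε_α⁻¹` for the Green kernel, with `q = p/(p-1)`,
`ε_α = min(α, |α−π/2|, π−α)`, `p` admissible for `α`, and `θ ≠ y`. -/
theorem stmt18 :
    ∃ C : ℝ, 0 < C ∧
      ∀ α : ℝ, 0 < α → α < Real.pi → α ≠ Real.pi / 2 →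
      ∀ p : ℝ, 2 ≤ p → Admissible α p →
      ∀ ξ θ y : ℝ, 0 < θ → θ < α → 0 < y → y < α → θ ≠ y →
        norm (deriv (fun t : ℝ => Kker (p / (p - 1)) α ξ t y) θ) ≤
            C / min α (min |α - Real.pi / 2| (Real.pi - α)) ∧
          |ξ| * norm (Kker (p / (p - 1)) α ξ θ y) ≤
            C / min α (min |α - Real.pi / 2| (Real.pi - α)) ∧
          |ξ| *
              norm
                (deriv (fun s : ℝ =>
                  deriv (fun t : ℝ => Kker (p / (p - 1)) α s t y) θ) ξ) ≤
            C / min α (min |α - Real.pi / 2| (Real.pi - α)) := by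
  refine ⟨100, by norm_num, ?_⟩
  intro α hα0 hαπ hαne p hp2 hadm ξ θ y hθ0 hθα hy0 hyα hθy
  have hπ := Real.pi_pos
  set q := p / (p - 1) with hq
  set ε := min α (min |α - Real.pi/2| (Real.pi - α)) with hε
  have hε0 : 0 < ε := by
    apply lt_min hα0
    apply lt_min (abs_pos.mpr (sub_ne_zero.mpr hαne))
    linarith
  have hm' := m_lower hα0 hαπ hαne hp2 hadm
  set m := |Real.sin ((2/q) * α)| with hmdef
  have hm : (2/Real.pi) * ε ≤ m := hm'
  have hm0 : 0 < m := lt_of_lt_of_le (by positivity) hm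
  have hm1 : m ≤ 1 := Real.abs_sin_le_one _
  -- facts about q and Xi
  have hp0 : (0:ℝ) < p := by linarith
  have hp1 : (0:ℝ) < p - 1 := by linarith
  have hq0 : 0 < q := by rw [hq]; positivity
  have h2q : 0 < 2/q := by positivity
  have hΞne : ∀ s : ℝ, Xi q s ≠ 0 := by
    intro s h
    have h2 := congrArg Complex.re h
    simp [Xi] at h2
    linarith
  have hTm : ∀ s : ℝ, m ≤ norm (Complex.sin (Xi q s * (α:ℂ))) := by
    intro s
    have h := sin_re_le_abs_sin (Xi q s * (α:ℂ))
    rwa [Xi_mul_re] at h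
  have hTs : ∀ s : ℝ, Real.sinh (|s| * α) ≤ norm (Complex.sin (Xi q s * (α:ℂ))) := by
    intro s
    have h := sinh_im_le_abs_sin (Xi q s * (α:ℂ))
    rw [Xi_mul_im] at h
    calc Real.sinh (|s| * α) = |Real.sinh (s*α)| := by
          rw [← sinh_abs', abs_mul, abs_of_nonneg hα0.le]
    _ ≤ _ := h
  have hsne : ∀ s : ℝ, Complex.sin (Xi q s * (α:ℂ)) ≠ 0 := by
    intro s h
    have h2 := hTm s
    rw [h, norm_zero] at h2
    linarith
  have hTsq : ∀ s : ℝ, norm (Complex.sin (Xi q s * (α:ℂ))) ^ 2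
      = m^2 + Real.sinh (|s| * α)^2 := by
    intro s
    rw [sq_abs_sin, Xi_mul_re, Xi_mul_im, hmdef, _root_.sq_abs]
    congr 1
    rw [← _root_.sq_abs (Real.sinh (s*α)), ← sinh_abs', abs_mul, abs_of_nonneg hα0.le]
  have hyc : ((y:ℂ) - (α:ℂ)) = ((y - α : ℝ):ℂ) := by push_cast; ring
  have hθc : ((θ:ℂ) - (α:ℂ)) = ((θ - α : ℝ):ℂ) := by push_cast; ring
  rcases hθy.lt_or_gt with hlt | hgt
  · -- θ < y
    refine ⟨?_, ?_, ?_⟩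
    · -- quantity 1
      rw [deriv_inner_lt hlt (hΞne ξ) (hsne ξ), hyc]
      refine to_eps (c := 2) hε0 hm0 hm (by norm_num) (by norm_num) ?_
      apply q1_bound hα0 hm0 hm1 (hTm ξ) (hTs ξ)
      rw [abs_of_nonneg hθ0.le, abs_of_nonpos (by linarith : y - α ≤ 0)]
      linarith
    · -- quantity 2
      have hK : Kker q α ξ θ y = Complex.sin (Xi q ξ * (θ:ℂ)) *
          Complex.sin (Xi q ξ * ((y - α : ℝ):ℂ)) /
          (Xi q ξ * Complex.sin (Xi q ξ * (α:ℂ))) := by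
        rw [Kker, if_pos hlt.le, hyc]
      rw [hK]
      refine to_eps (c := 2) hε0 hm0 hm (by norm_num) (by norm_num) ?_
      apply q2_bound hα0 hm0 hm1 (hTm ξ) (hTs ξ) (hΞne ξ)
      rw [abs_of_nonneg hθ0.le, abs_of_nonpos (by linarith : y - α ≤ 0)]
      linarith
    · -- quantity 3
      have hfun : (fun s : ℝ => deriv (fun t : ℝ => Kker q α s t y) θ)
          = fun s : ℝ => (Complex.sin (Xi q s * ((θ + y - α : ℝ):ℂ)) +
              Complex.sin (Xi q s * ((y - α - θ : ℝ):ℂ))) /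
              (2 * Complex.sin (Xi q s * (α:ℂ))) := by
        funext s
        rw [deriv_inner_lt hlt (hΞne s) (hsne s), two_cos_mul_sin]
        have e1 : Xi q s * (θ:ℂ) + Xi q s * ((y:ℂ) - (α:ℂ))
            = Xi q s * ((θ + y - α : ℝ):ℂ) := by push_cast; ring
        have e2 : Xi q s * ((y:ℂ) - (α:ℂ)) - Xi q s * (θ:ℂ)
            = Xi q s * ((y - α - θ : ℝ):ℂ) := by push_cast; ring
        rw [e1, e2, div_div]
      rw [hfun, (hasDerivAt_outer q ξ α (θ + y - α) (y - α - θ) (hsne ξ)).deriv]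
      refine to_eps (c := 16) hε0 hm0 hm (by norm_num) (by norm_num) ?_
      apply q3_bound hα0 hm0 hm1 (hTsq ξ)
      · rw [abs_le]; constructor <;> linarith
      · rw [abs_le]; constructor <;> linarith
  · -- y < θ
    refine ⟨?_, ?_, ?_⟩
    · rw [deriv_inner_gt hgt (hΞne ξ) (hsne ξ), hθc]
      refine to_eps (c := 2) hε0 hm0 hm (by norm_num) (by norm_num) ?_
      apply q1_bound hα0 hm0 hm1 (hTm ξ) (hTs ξ)
      rw [abs_of_nonpos (by linarith : θ - α ≤ 0), abs_of_nonneg hy0.le]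
      linarith
    · have hK : Kker q α ξ θ y = Complex.sin (Xi q ξ * ((θ - α : ℝ):ℂ)) *
          Complex.sin (Xi q ξ * (y:ℂ)) /
          (Xi q ξ * Complex.sin (Xi q ξ * (α:ℂ))) := by
        rw [Kker, if_neg (not_le.mpr hgt), hθc]
      rw [hK]
      refine to_eps (c := 2) hε0 hm0 hm (by norm_num) (by norm_num) ?_
      apply q2_bound hα0 hm0 hm1 (hTm ξ) (hTs ξ) (hΞne ξ)
      rw [abs_of_nonpos (by linarith : θ - α ≤ 0), abs_of_nonneg hy0.le]
      linarith
    · have hfun : (fun s : ℝ => deriv (fun t : ℝ => Kker q α s t y) θ)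
          = fun s : ℝ => (Complex.sin (Xi q s * ((θ + y - α : ℝ):ℂ)) +
              Complex.sin (Xi q s * ((y - θ + α : ℝ):ℂ))) /
              (2 * Complex.sin (Xi q s * (α:ℂ))) := by
        funext s
        rw [deriv_inner_gt hgt (hΞne s) (hsne s), two_cos_mul_sin]
        have e1 : Xi q s * ((θ:ℂ) - (α:ℂ)) + Xi q s * (y:ℂ)
            = Xi q s * ((θ + y - α : ℝ):ℂ) := by push_cast; ring
        have e2 : Xi q s * (y:ℂ) - Xi q s * ((θ:ℂ) - (α:ℂ))
            = Xi q s * ((y - θ + α : ℝ):ℂ) := by push_cast; ring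
        rw [e1, e2, div_div]
      rw [hfun, (hasDerivAt_outer q ξ α (θ + y - α) (y - θ + α) (hsne ξ)).deriv]
      refine to_eps (c := 16) hε0 hm0 hm (by norm_num) (by norm_num) ?_
      apply q3_bound hα0 hm0 hm1 (hTsq ξ)
      · rw [abs_le]; constructor <;> linarith
      · rw [abs_le]; constructor <;> linarith
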